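/- Let F be a field of characteristic 2 in which every separable monic polynomial of degree 2 splits. Then every 2×2 symmetric matrix over F is triangularizable over F. -/

import Mathlib

/-- A square matrix is triangularizable over the ground field when it is
similar over that field to an upper triangular matrix. -/
def Matrix.Triangularizable {n : ℕ} {F : Type*} [Field F]
    (M : Matrix (Fin n) (Fin n) F) : Prop :=
  ∃ P : (Matrix (Fin n) (Fin n) F)ˣ,
    ((P : Matrix (Fin n) (Fin n) F) * M * ((P⁻¹ : (Matrix (Fin n) (Fin n) F)ˣ) :
      Matrix (Fin n) (Fin n) F)).BlockTriangular id

theorem stmt_11 {F : Type*} [Field F] [CharP F 2]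
    (hsep : ∀ b c : F, b ≠ 0 → ∃ x : F, x ^ 2 + b * x + c = 0)
    (M : Matrix (Fin 2) (Fin 2) F) (hM : M.IsSymm) :
    M.Triangularizable := by
  have h2 : (2 : F) = 0 := CharTwo.two_eq_zero
  set p := M 0 0 with hp
  set q := M 1 0 with hq
  set r := M 1 1 with hr
  have hsym : M 0 1 = q := by rw [hq, ← hM.apply 1 0]
  by_cases hq0 : q = 0
  · refine ⟨1, ?_⟩
    intro i j hij
    fin_cases i <;> fin_cases j <;> simp_all
  -- find an eigenvalue
  obtain ⟨l, hl⟩ : ∃ l : F, l ^ 2 + (p + r) * l + (p * r + q ^ 2) = 0 := by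
    by_cases htr : p + r = 0
    · refine ⟨p + q, ?_⟩
      have hrp : r = p := by linear_combination htr - p * h2
      rw [htr, hrp]
      ring_nf
      linear_combination (p * q + p ^ 2 + q ^ 2) * h2
    · exact hsep (p + r) (p * r + q ^ 2) htr
  refine ⟨⟨!![q⁻¹, 0; (p + l) * q⁻¹, 1], !![q, 0; l + p, 1], ?_, ?_⟩, ?_⟩
  · ext i j
    fin_cases i <;> fin_cases j <;>
      simp [Matrix.mul_apply, Fin.sum_univ_two] <;> field_simp <;>
      linear_combination (p + l) * h2
  · ext i j
    fin_cases i <;> fin_cases j <;>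
      simp [Matrix.mul_apply, Fin.sum_univ_two] <;> field_simp <;>
      linear_combination (p + l) * h2
  · intro i j hij
    fin_cases i <;> fin_cases j <;> simp_all [Matrix.mul_apply, Fin.sum_univ_two]
    simp [Matrix.vecMul, dotProduct, Fin.sum_univ_two, hsym]
    field_simp
    linear_combination hl + (l * p + p ^ 2) * h2 + (3 * M 0 0 * l + 2 * M 0 0 ^ 2 + l ^ 2 + M 1 0 ^ 2) * mul_inv_cancel₀ (hq0 : M 1 0 ≠ 0)
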